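/- Let α∈(0,1), a>0 and 0<κ<1, and define φ(z) = (a + κ z^{1/α})^α for z≥0. Then |φ(z₁) − φ(z₂)| ≤ κ^α |z₁ − z₂| for all z₁,z₂ ≥ 0; in particular φ is a contraction with constant κ^α < 1. -/

import Mathlib

/-- `φ(z) = (a + κ z^(1/α))^α` is a contraction with constant `κ^α < 1`
for `α ∈ (0,1)`, `a > 0`, `0 < κ < 1`. -/
theorem stmt3 (α a κ : ℝ) (hα0 : 0 < α) (hα1 : α < 1) (ha : 0 < a)
    (hκ0 : 0 < κ) (hκ1 : κ < 1) (z₁ z₂ : ℝ) (hz₁ : 0 ≤ z₁) (hz₂ : 0 ≤ z₂) :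
    |(a + κ * z₁ ^ (1 / α)) ^ α - (a + κ * z₂ ^ (1 / α)) ^ α| ≤ κ ^ α * |z₁ - z₂| := by
  set β := 1 / α with hβ
  have hβ1 : 1 ≤ β := by
    rw [hβ, le_div_iff₀ hα0]; linarith
  have hαβ : α * β = 1 := by
    rw [hβ, mul_one_div_cancel hα0.ne']
  set f : ℝ → ℝ := fun z => (a + κ * z ^ β) ^ α with hf
  set f' : ℝ → ℝ := fun z => α * (a + κ * z ^ β) ^ (α - 1) * (κ * (β * z ^ (β - 1))) with hf'
  have hderiv : ∀ z ∈ Set.Ici (0:ℝ), HasDerivWithinAt f (f' z) (Set.Ici 0) z := by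
    intro z hz
    have hz0 : (0:ℝ) ≤ z := hz
    have hgz : 0 < a + κ * z ^ β := by positivity
    have h1 : HasDerivWithinAt (fun z : ℝ => a + κ * z ^ β)
        (κ * (β * z ^ (β - 1))) (Set.Ici 0) z :=
      (((Real.hasDerivAt_rpow_const (Or.inr hβ1)).const_mul κ).const_add a).hasDerivWithinAt
    have h2 : HasDerivAt (fun y : ℝ => y ^ α) (α * (a + κ * z ^ β) ^ (α - 1))
        (a + κ * z ^ β) :=
      Real.hasDerivAt_rpow_const (Or.inl hgz.ne')
    exact h2.comp_hasDerivWithinAt z h1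
  have hbound : ∀ z ∈ Set.Ici (0:ℝ), ‖f' z‖ ≤ κ ^ α := by
    intro z hz
    have hz0 : (0:ℝ) ≤ z := hz
    have hgz : 0 < a + κ * z ^ β := by positivity
    have hgz1 : (0:ℝ) < (a + κ * z ^ β) ^ (1 - α) := Real.rpow_pos_of_pos hgz _
    have hnn : 0 ≤ f' z := by
      rw [hf']
      have : (0:ℝ) ≤ (a + κ * z ^ β) ^ (α - 1) := Real.rpow_nonneg hgz.le _
      have hzb : (0:ℝ) ≤ z ^ (β - 1) := Real.rpow_nonneg hz0 _
      positivity
    rw [Real.norm_eq_abs, abs_of_nonneg hnn]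
    show α * (a + κ * z ^ β) ^ (α - 1) * (κ * (β * z ^ (β - 1))) ≤ κ ^ α
    have e1 : β * (1 - α) = β - 1 := by
      calc β * (1 - α) = β - α * β := by ring
        _ = β - 1 := by rw [hαβ]
    have key : κ * z ^ (β - 1) ≤ κ ^ α * (a + κ * z ^ β) ^ (1 - α) := by
      have h1 : κ * z ^ (β - 1) = κ ^ α * (κ * z ^ β) ^ (1 - α) := by
        rw [Real.mul_rpow hκ0.le (Real.rpow_nonneg hz0 _), ← Real.rpow_mul hz0,
          e1, ← mul_assoc, ← Real.rpow_add hκ0]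
        norm_num
      rw [h1]
      gcongr
      all_goals first
        | positivity
        | linarith [mul_nonneg hκ0.le (Real.rpow_nonneg hz0 β)]
    have hX : (a + κ * z ^ β) ^ (α - 1) = ((a + κ * z ^ β) ^ (1 - α))⁻¹ := by
      rw [← Real.rpow_neg hgz.le]; ring_nf
    have hrw : α * (a + κ * z ^ β) ^ (α - 1) * (κ * (β * z ^ (β - 1)))
        = ((a + κ * z ^ β) ^ (1 - α))⁻¹ * (κ * z ^ (β - 1)) := by
      rw [hX]
      calc α * ((a + κ * z ^ β) ^ (1 - α))⁻¹ * (κ * (β * z ^ (β - 1)))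
          = (α * β) * (((a + κ * z ^ β) ^ (1 - α))⁻¹ * (κ * z ^ (β - 1))) := by ring
        _ = ((a + κ * z ^ β) ^ (1 - α))⁻¹ * (κ * z ^ (β - 1)) := by rw [hαβ, one_mul]
    rw [hrw, inv_mul_le_iff₀ hgz1]
    calc κ * z ^ (β - 1) ≤ κ ^ α * (a + κ * z ^ β) ^ (1 - α) := key
      _ = (a + κ * z ^ β) ^ (1 - α) * κ ^ α := by ring
  have := (convex_Ici (0:ℝ)).norm_image_sub_le_of_norm_hasDerivWithin_le
    hderiv hbound (Set.mem_Ici.mpr hz₂) (Set.mem_Ici.mpr hz₁)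
  simpa [Real.norm_eq_abs, hf] using this
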